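/- Suppose R is a principal ideal domain, a_1 ≠ 0, and gcd(a_1,a_2) = 1. Let b ∈ R satisfy a_2·b ≡ 1 (mod a_1), and set c_i = −a_i·b for 3 ≤ i ≤ n. Then the vectors z_2 = a_1·w(1,2) and z_i = c_i·w(1,2) + w(1,i) for 3 ≤ i ≤ n form an R-basis of S. -/

import Mathlib

/-- The vectors `z₂ = a₁·w(1,2)` and `zᵢ = cᵢ·w(1,2) + w(1,i)` (`3 ≤ i ≤ n`),
where `cᵢ = −aᵢ·b` and `a₂·b ≡ 1 (mod a₁)`, form an `R`-basis of `S`,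
provided `gcd(a₁,a₂) = 1`. Here `n = m + 1`. -/
theorem stmt_11 {R : Type*} [CommRing R] [IsDomain R] [IsPrincipalIdealRing R]
    {K : Type*} [Field K] [Algebra R K] [IsFractionRing R K]
    {m : ℕ} (hm : 1 ≤ m) (a : Fin (m + 1) → R)
    (huni : Ideal.span (Set.range a) = ⊤) (ha1 : a 0 ≠ 0)
    (hcop : IsCoprime (a 0) (a (⟨1, by omega⟩ : Fin (m + 1))))
    (b : R) (hb : a 0 ∣ a (⟨1, by omega⟩ : Fin (m + 1)) * b - 1)
    (SF : Submodule R (Fin (m + 1) → K))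
    (hSF : ∀ x, x ∈ SF ↔ (∀ i, ∃ r : R, algebraMap R K r = x i) ∧
      ∑ i, algebraMap R K (a i) * x i = 0)
    (w : Fin m → Fin (m + 1) → K)
    (hw : ∀ j k, w j k =
      if k = 0 then -(algebraMap R K (a j.succ)) / algebraMap R K (a 0)
      else if k = j.succ then 1 else 0) :
    ∃ bS : Module.Basis (Fin m) R SF, ∀ j : Fin m,
      (bS j : Fin (m + 1) → K) =
        if j = (⟨0, by omega⟩ : Fin m) then a 0 • w ⟨0, by omega⟩
        else (-(a j.succ * b)) • w ⟨0, by omega⟩ + w j := by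
  obtain ⟨p, rfl⟩ : ∃ p, m = p + 1 := ⟨m - 1, by omega⟩
  obtain ⟨d, hd⟩ := hb
  have inj : Function.Injective (algebraMap R K) := IsFractionRing.injective R K
  set φ := algebraMap R K with hφ
  have hone : (⟨1, by omega⟩ : Fin (p + 1 + 1)) = (0 : Fin (p + 1)).succ := rfl
  rw [hone] at hd
  -- the integral vectors
  set Z : Fin (p + 1) → Fin (p + 2) → R := fun j k =>
    if j = 0 then (if k = 0 then -(a (0 : Fin (p+1)).succ) else if k = (0 : Fin (p+1)).succ then a 0 else 0)
    else (if k = 0 then a j.succ * d else if k = (0 : Fin (p+1)).succ then -(a j.succ * b)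
      else if k = j.succ then 1 else 0) with hZdef
  -- component lemmas
  have hZ00 : Z 0 0 = -(a (0 : Fin (p+1)).succ) := by simp [hZdef]
  have hZ01 : Z 0 (0 : Fin (p+1)).succ = a 0 := by simp [hZdef, Fin.succ_ne_zero]
  have hZ0s : ∀ t : Fin p, Z 0 t.succ.succ = 0 := by
    intro t
    have h1 : (t.succ.succ : Fin (p+2)) ≠ 0 := Fin.succ_ne_zero _
    have h2 : (t.succ.succ : Fin (p+2)) ≠ (0 : Fin (p+1)).succ := by simp [Fin.ext_iff]
    simp only [hZdef, if_pos rfl, if_neg h1, if_neg h2]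
  have hZj0 : ∀ j : Fin p, Z j.succ 0 = a j.succ.succ * d := by
    intro j
    simp only [hZdef, if_neg (Fin.succ_ne_zero j), if_pos rfl, eq_self_iff_true, if_true]
  have hZj1 : ∀ j : Fin p, Z j.succ (0 : Fin (p+1)).succ = -(a j.succ.succ * b) := by
    intro j
    have h1 : ((0 : Fin (p+1)).succ : Fin (p+2)) ≠ 0 := Fin.succ_ne_zero _
    simp only [hZdef, if_neg (Fin.succ_ne_zero j), if_neg h1, if_pos rfl, eq_self_iff_true, if_true]
  have hZjs : ∀ j t : Fin p, Z j.succ t.succ.succ = if t = j then 1 else 0 := by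
    intro j t
    have h1 : (t.succ.succ : Fin (p+2)) ≠ 0 := Fin.succ_ne_zero _
    have h2 : (t.succ.succ : Fin (p+2)) ≠ (0 : Fin (p+1)).succ := by simp [Fin.ext_iff]
    have h3 : ((t.succ.succ : Fin (p+2)) = j.succ.succ) ↔ t = j := by simp [Fin.ext_iff]
    simp only [hZdef, if_neg (Fin.succ_ne_zero j), if_neg h1, if_neg h2]
    by_cases h : t = j
    · rw [if_pos (h3.mpr h), if_pos h]
    · rw [if_neg (fun hh => h (h3.mp hh)), if_neg h]
  -- the sums
  have hsum : ∀ j, ∑ i, a i * Z j i = 0 := by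
    intro j
    induction j using Fin.cases with
    | zero =>
      rw [Fin.sum_univ_succ, Fin.sum_univ_succ]
      rw [Finset.sum_congr rfl (fun t _ => by rw [hZ0s t, mul_zero]), Finset.sum_const_zero,
        hZ00, hZ01]
      ring
    | succ j' =>
      rw [Fin.sum_univ_succ, Fin.sum_univ_succ]
      rw [Finset.sum_congr rfl (fun t (_ : t ∈ Finset.univ) => by rw [hZjs j' t, mul_ite, mul_one, mul_zero])]
      rw [Finset.sum_ite_eq' Finset.univ j' (fun t => a t.succ.succ), if_pos (Finset.mem_univ j')]
      rw [hZj0, hZj1]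
      linear_combination (-(a j'.succ.succ)) * hd
  -- membership
  have hz_mem : ∀ j, (fun k => φ (Z j k)) ∈ SF := by
    intro j
    rw [hSF]
    refine ⟨fun i => ⟨Z j i, rfl⟩, ?_⟩
    have : ∑ i, φ (a i) * φ (Z j i) = φ (∑ i, a i * Z j i) := by
      rw [map_sum]; exact Finset.sum_congr rfl fun i _ => (map_mul φ _ _).symm
    rw [this, hsum j, map_zero]
  set v : Fin (p + 1) → SF := fun j => ⟨fun k => φ (Z j k), hz_mem j⟩ with hv
  have hcoe : ∀ c : Fin (p+1) → R, ∀ k, ((∑ j, c j • v j : SF) : Fin (p+2) → K) k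
      = φ (∑ j, c j * Z j k) := by
    intro c k
    rw [map_sum]
    simp only [AddSubmonoidClass.coe_finset_sum, SetLike.val_smul, Finset.sum_apply,
      Pi.smul_apply, hv, Algebra.smul_def, map_mul, hφ, Pi.algebraMap_apply, Pi.mul_apply]
  -- linear independence
  have hli : LinearIndependent R v := by
    rw [Fintype.linearIndependent_iff]
    intro g hg
    have hg' : ∀ k, ∑ j, g j * Z j k = 0 := by
      intro k
      apply inj
      rw [map_zero, ← hcoe g k, hg]
      rfl
    have hsucc : ∀ t : Fin p, g t.succ = 0 := by
      intro t
      have hk := hg' t.succ.succ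
      rw [Fin.sum_univ_succ] at hk
      rw [Finset.sum_congr rfl (fun s (_ : s ∈ Finset.univ) => by
        rw [hZjs s t, mul_ite, mul_one, mul_zero])] at hk
      rw [Finset.sum_ite_eq Finset.univ t (fun s => g s.succ), if_pos (Finset.mem_univ t)] at hk
      rw [hZ0s t, mul_zero, zero_add] at hk
      exact hk
    have h0 : g 0 = 0 := by
      have hk := hg' (0 : Fin (p+1)).succ
      rw [Fin.sum_univ_succ] at hk
      rw [Finset.sum_congr rfl (fun s (_ : s ∈ Finset.univ) => by
        rw [hsucc s, zero_mul]), Finset.sum_const_zero, add_zero, hZ01] at hk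
      rcases mul_eq_zero.mp hk with h | h
      · exact h
      · exact absurd h ha1
    intro j
    induction j using Fin.cases with
    | zero => exact h0
    | succ t => exact hsucc t
  -- spanning
  have hspan : ⊤ ≤ Submodule.span R (Set.range v) := by
    intro x _
    obtain ⟨hx1, hx2⟩ := (hSF x).mp x.2
    choose r hr using hx1
    have hrsum : ∑ i, a i * r i = 0 := by
      apply inj
      rw [map_sum, map_zero, ← hx2]
      exact Finset.sum_congr rfl fun i _ => by rw [map_mul, hr]
    have hT : a 0 * r 0 + a (0 : Fin (p+1)).succ * r (0 : Fin (p+1)).succ +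
        ∑ t : Fin p, a t.succ.succ * r t.succ.succ = 0 := by
      rw [Fin.sum_univ_succ, Fin.sum_univ_succ] at hrsum
      linear_combination hrsum
    set c : Fin (p + 1) → R := Fin.cases (-(d * r (0 : Fin (p+1)).succ + b * r 0))
      (fun t => r t.succ.succ) with hcdef
    have hc0 : c 0 = -(d * r (0 : Fin (p+1)).succ + b * r 0) := rfl
    have hcs : ∀ t : Fin p, c t.succ = r t.succ.succ := fun t => by
      simp only [hcdef, Fin.cases_succ]
    have key : ∀ k, ∑ j, c j * Z j k = r k := by
      intro k
      induction k using Fin.cases with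
      | zero =>
        rw [Fin.sum_univ_succ]
        rw [Finset.sum_congr rfl (fun t (_ : t ∈ Finset.univ) => by
          rw [hcs t, hZj0 t, show r t.succ.succ * (a t.succ.succ * d)
            = a t.succ.succ * r t.succ.succ * d from by ring])]
        rw [← Finset.sum_mul, hc0, hZ00]
        linear_combination d * hT + r 0 * hd
      | succ k' =>
        induction k' using Fin.cases with
        | zero =>
          rw [Fin.sum_univ_succ]
          rw [Finset.sum_congr rfl (fun t (_ : t ∈ Finset.univ) => by
            rw [hcs t, hZj1 t, show r t.succ.succ * -(a t.succ.succ * b)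
              = a t.succ.succ * r t.succ.succ * (-b) from by ring])]
          rw [← Finset.sum_mul, hc0, hZ01]
          linear_combination (-b) * hT + r (0 : Fin (p+1)).succ * hd
        | succ t0 =>
          rw [Fin.sum_univ_succ]
          rw [Finset.sum_congr rfl (fun t (_ : t ∈ Finset.univ) => by
            rw [hcs t, hZjs t t0, mul_ite, mul_one, mul_zero])]
          have hsw : ∀ t : Fin p, (if t0 = t then r t.succ.succ else 0)
              = if t = t0 then r t0.succ.succ else 0 := by
            intro t
            by_cases h : t = t0
            · subst h; simp
            · rw [if_neg (fun hh => h hh.symm), if_neg h]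
          rw [Finset.sum_congr rfl (fun t _ => hsw t)]
          rw [Finset.sum_ite_eq' Finset.univ t0 (fun _ => r t0.succ.succ),
            if_pos (Finset.mem_univ t0)]
          rw [hZ0s t0, mul_zero, zero_add]
    have hxeq : x = ∑ j, c j • v j := by
      apply Subtype.ext
      funext k
      rw [hcoe c k, key k]
      exact (hr k).symm
    rw [hxeq]
    exact Submodule.sum_mem _ fun j _ =>
      Submodule.smul_mem _ _ (Submodule.subset_span ⟨j, rfl⟩)
  refine ⟨Module.Basis.mk hli hspan, ?_⟩
  intro j
  rw [Module.Basis.mk_apply]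
  have hφ0 : φ (a 0) ≠ 0 := fun h => ha1 (inj (by simpa using h))
  have hdK : φ (a (0 : Fin (p+1)).succ) * φ b - 1 = φ (a 0) * φ d := by
    have := congrArg φ hd
    rw [map_sub, map_mul, map_one, map_mul] at this
    exact this
  have hw0 : ∀ k, w (⟨0, by omega⟩ : Fin (p+1)) k = w (0 : Fin (p+1)) k := fun k => rfl
  induction j using Fin.cases with
  | zero =>
    rw [if_pos (by simp [Fin.ext_iff])]
    funext k
    show φ (Z 0 k) = (a 0 • w ⟨0, by omega⟩) k
    rw [Pi.smul_apply, Algebra.smul_def, hw0, hw]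
    induction k using Fin.cases with
    | zero =>
      rw [if_pos rfl, hZ00, ← hφ]
      field_simp
      rw [map_neg]
    | succ k' =>
      induction k' using Fin.cases with
      | zero =>
        rw [if_neg (Fin.succ_ne_zero _), if_pos rfl, hZ01, mul_one]
      | succ t =>
        have h1 : (t.succ.succ : Fin (p+2)) ≠ 0 := Fin.succ_ne_zero _
        have h2 : (t.succ.succ : Fin (p+2)) ≠ (0 : Fin (p+1)).succ := by simp [Fin.ext_iff]
        rw [if_neg h1, if_neg h2, hZ0s t, map_zero, mul_zero]
  | succ t =>
    rw [if_neg (by simp [Fin.ext_iff])]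
    funext k
    show φ (Z t.succ k) = ((-(a t.succ.succ * b)) • w ⟨0, by omega⟩ + w t.succ) k
    rw [Pi.add_apply, Pi.smul_apply, Algebra.smul_def, hw0, hw, hw]
    induction k using Fin.cases with
    | zero =>
      rw [if_pos rfl, if_pos rfl, hZj0, ← hφ, map_mul, map_neg, map_mul]
      field_simp
      simp only [Fin.succ_zero_eq_one] at hdK ⊢
      linear_combination (-(φ (a t.succ.succ))) * hdK
    | succ k' =>
      induction k' using Fin.cases with
      | zero =>
        have hne : ((0 : Fin (p+1)).succ : Fin (p+2)) ≠ t.succ.succ := by simp [Fin.ext_iff]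
        rw [if_neg (Fin.succ_ne_zero _), if_neg (Fin.succ_ne_zero _), if_pos rfl, if_neg hne,
          hZj1, mul_one, add_zero, ← hφ]
      | succ s =>
        have h1 : (s.succ.succ : Fin (p+2)) ≠ 0 := Fin.succ_ne_zero _
        have h2 : (s.succ.succ : Fin (p+2)) ≠ (0 : Fin (p+1)).succ := by simp [Fin.ext_iff]
        have h3 : ((s.succ.succ : Fin (p+2)) = t.succ.succ) ↔ s = t := by simp [Fin.ext_iff]
        rw [if_neg h1, if_neg h2, if_neg h1, hZjs t s, mul_zero, zero_add]
        by_cases h : s = t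
        · rw [if_pos (h3.mpr h), if_pos h, map_one]
        · rw [if_neg (fun hh => h (h3.mp hh)), if_neg h, map_zero]
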